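/- arXiv:1805.08565 — 2 statements merged into one kernel-verified Lean document; each statement's English description precedes it below -/
import Mathlib

section
/- Let p, K : [a,b] → ℝ be continuous with p > 0 and K > 0 on [a,b], and let g : [a,b] → ℝ be twice continuously differentiable, satisfying the Sturm–Liouville equation (p·K·g')' + λ·p·g = 0 on [a,b] with λ > 0, and the Neumann boundary conditions p(a)K(a)g'(a) = 0 and p(b)K(b)g'(b) = 0. Suppose g has exactly one zero ξ in (a,b), with g < 0 on [a,ξ) and g > 0 on (ξ,b]. Then g is strictly monotonically increasing on [a,b]. -/
/-- Sturm–Liouville monotonicity of the first harmonic (Lemma 1). -/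
theorem sturm_liouville_first_harmonic_monotone
    (a b ξ lam : ℝ) (hab : a < b)
    (p K g g' pKg' : ℝ → ℝ)
    (hp : ContinuousOn p (Set.Icc a b)) (hK : ContinuousOn K (Set.Icc a b))
    (hppos : ∀ x ∈ Set.Icc a b, 0 < p x) (hKpos : ∀ x ∈ Set.Icc a b, 0 < K x)
    (hg' : ∀ x ∈ Set.Icc a b, HasDerivAt g (g' x) x)
    (hg'cont : ContinuousOn g' (Set.Icc a b))
    (hpKg' : ∀ x ∈ Set.Icc a b, HasDerivAt (fun y => p y * K y * g' y) (pKg' x) x)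
    (hpKg'cont : ContinuousOn pKg' (Set.Icc a b))
    (hlam : 0 < lam)
    (heq : ∀ x ∈ Set.Icc a b, pKg' x + lam * p x * g x = 0)
    (hbca : p a * K a * g' a = 0) (hbcb : p b * K b * g' b = 0)
    (hξ : ξ ∈ Set.Ioo a b) (hgξ : g ξ = 0)
    (huniq : ∀ x ∈ Set.Ioo a b, g x = 0 → x = ξ)
    (hneg : ∀ x ∈ Set.Ico a ξ, g x < 0)
    (hpos : ∀ x ∈ Set.Ioc ξ b, 0 < g x) :
    StrictMonoOn g (Set.Icc a b) := by
  have hξa : a < ξ := hξ.1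
  have hξb : ξ < b := hξ.2
  have hFcont : ContinuousOn (fun y => p y * K y * g' y) (Set.Icc a b) :=
    fun x hx => (hpKg' x hx).continuousAt.continuousWithinAt
  have hFpos : ∀ x ∈ Set.Ioo a b, 0 < p x * K x * g' x := by
    intro x hx
    rcases le_or_gt x ξ with hxξ | hxξ
    · have hmono : StrictMonoOn (fun y => p y * K y * g' y) (Set.Icc a ξ) := by
        apply strictMonoOn_of_deriv_pos (convex_Icc a ξ)
        · exact hFcont.mono (Set.Icc_subset_Icc le_rfl hξb.le)
        · intro y hy
          rw [interior_Icc] at hy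
          have hyI : y ∈ Set.Icc a b := ⟨hy.1.le, hy.2.le.trans hξb.le⟩
          rw [(hpKg' y hyI).deriv]
          have h1 := heq y hyI
          have hgy := hneg y ⟨hy.1.le, hy.2⟩
          nlinarith [mul_pos hlam (hppos y hyI)]
      have := hmono (Set.left_mem_Icc.mpr hξa.le) ⟨hx.1.le, hxξ⟩ hx.1
      simpa [hbca] using this
    · have hanti : StrictAntiOn (fun y => p y * K y * g' y) (Set.Icc ξ b) := by
        apply strictAntiOn_of_deriv_neg (convex_Icc ξ b)
        · exact hFcont.mono (Set.Icc_subset_Icc hξa.le le_rfl)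
        · intro y hy
          rw [interior_Icc] at hy
          have hyI : y ∈ Set.Icc a b := ⟨hξa.le.trans hy.1.le, hy.2.le⟩
          rw [(hpKg' y hyI).deriv]
          have h1 := heq y hyI
          have hgy := hpos y ⟨hy.1, hy.2.le⟩
          nlinarith [mul_pos hlam (hppos y hyI)]
      have := hanti ⟨hxξ.le, hx.2.le⟩ (Set.right_mem_Icc.mpr hξb.le) hx.2
      simpa [hbcb] using this
  apply strictMonoOn_of_deriv_pos (convex_Icc a b)
  · exact fun x hx => (hg' x hx).continuousAt.continuousWithinAt
  · intro x hx
    rw [interior_Icc] at hx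
    have hxI : x ∈ Set.Icc a b := ⟨hx.1.le, hx.2.le⟩
    rw [(hg' x hxI).deriv]
    have hF := hFpos x hx
    nlinarith [hppos x hxI, hKpos x hxI, mul_pos (hppos x hxI) (hKpos x hxI)]
end

section
/- Let f : ℝ^{r×p} × ℝ^{r×q} → ℝ be defined by f(B,U) = tr⟨(w − Bζ − Uμ)(w − Bζ − Uμ)ᵀ⟩ where w, ζ, μ are fixed finite families of vectors and ⟨·⟩ denotes an empirical average. If ⟨ζζᵀ⟩ and ⟨μμᵀ⟩ are invertible and B, U satisfy the stationarity equations ⟨wζᵀ⟩ = U⟨μζᵀ⟩ + B⟨ζζᵀ⟩ and ⟨wμᵀ⟩ = B⟨ζμᵀ⟩ + U⟨μμᵀ⟩, and additionally the Schur-complement matrix ⟨ζζᵀ⟩ − ⟨ζμᵀ⟩⟨μμᵀ⟩⁻¹⟨μζᵀ⟩ is invertible, then B is uniquely determined as B = (⟨wζᵀ⟩ − ⟨wμᵀ⟩⟨μμᵀ⟩⁻¹⟨μζᵀ⟩)(⟨ζζᵀ⟩ − ⟨ζμᵀ⟩⟨μμᵀ⟩⁻¹⟨μζᵀ⟩)⁻¹.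 -/
open Matrix

/-- Empirical average of the outer product of two finite families of vectors. -/
noncomputable def avgOuter {T : Type*} [Fintype T] {a b : ℕ}
    (x : T → Fin a → ℝ) (y : T → Fin b → ℝ) : Matrix (Fin a) (Fin b) ℝ :=
  Matrix.of fun i j => (∑ t, x t i * y t j) / (Fintype.card T : ℝ)

/-- Explicit solution for the optimal prediction matrix `B` in PFAx (eq. (22)):
the two coupled normal equations determine `B` uniquely via a Schur complement. -/
theorem pfax_optimal_B_explicit
    {T : Type*} [Fintype T] [Nonempty T] (r p q : ℕ)
    (w : T → Fin r → ℝ) (ζ : T → Fin p → ℝ) (μ : T → Fin q → ℝ)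
    (B : Matrix (Fin r) (Fin p) ℝ) (U : Matrix (Fin r) (Fin q) ℝ)
    (hζζ : IsUnit (avgOuter ζ ζ)) (hμμ : IsUnit (avgOuter μ μ))
    (hSchur : IsUnit (avgOuter ζ ζ - avgOuter ζ μ * (avgOuter μ μ)⁻¹ * avgOuter μ ζ))
    (hstat₁ : avgOuter w ζ = U * avgOuter μ ζ + B * avgOuter ζ ζ)
    (hstat₂ : avgOuter w μ = B * avgOuter ζ μ + U * avgOuter μ μ) :
    B = (avgOuter w ζ - avgOuter w μ * (avgOuter μ μ)⁻¹ * avgOuter μ ζ) *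
        (avgOuter ζ ζ - avgOuter ζ μ * (avgOuter μ μ)⁻¹ * avgOuter μ ζ)⁻¹ := by
  have hμd : IsUnit (avgOuter μ μ).det := (Matrix.isUnit_iff_isUnit_det _).mp hμμ
  have hSd : IsUnit (avgOuter ζ ζ - avgOuter ζ μ * (avgOuter μ μ)⁻¹ * avgOuter μ ζ).det :=
    (Matrix.isUnit_iff_isUnit_det _).mp hSchur
  have key : avgOuter w ζ - avgOuter w μ * (avgOuter μ μ)⁻¹ * avgOuter μ ζ =
      B * (avgOuter ζ ζ - avgOuter ζ μ * (avgOuter μ μ)⁻¹ * avgOuter μ ζ) := by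
    rw [hstat₁, hstat₂]
    have : (B * avgOuter ζ μ + U * avgOuter μ μ) * (avgOuter μ μ)⁻¹ * avgOuter μ ζ =
        B * avgOuter ζ μ * (avgOuter μ μ)⁻¹ * avgOuter μ ζ + U * avgOuter μ ζ := by
      rw [Matrix.add_mul, Matrix.add_mul, Matrix.mul_nonsing_inv_cancel_right _ _ hμd]
    rw [this]
    rw [sub_add_eq_sub_sub, Matrix.mul_sub]
    simp only [Matrix.mul_assoc]
    abel
  rw [key, Matrix.mul_nonsing_inv_cancel_right _ _ hSd]
end
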